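/- Let A be a 4×4 real matrix with Aᵀ η A = η (where η = diag(−1,1,1,1)) and A₀₀ ≥ 1. Define D ∈ ℝ³ by Dᵢ = 2A_{i0}/(1 + A₀₀) and the 3×3 matrix R by R_{ij} = A_{ij} − A_{i0}A_{0j}/(1 + A₀₀), for i,j ∈ {1,2,3}. Then for every x ∈ H³, writing Φ(x, Ax) = (a⃗, b⃗), one has b⃗ = D + R a⃗. -/

import Mathlib

noncomputable section
open Matrix

/-- Minkowski inner product on ℝ⁴: ⟨x,y⟩ = −x₀y₀ + x₁y₁ + x₂y₂ + x₃y₃. -/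
def mink (x y : Fin 4 → ℝ) : ℝ :=
  -(x 0 * y 0) + x 1 * y 1 + x 2 * y 2 + x 3 * y 3

/-- The hyperboloid model of hyperbolic 3-space. -/
def Hyp : Set (Fin 4 → ℝ) := {x | 0 < x 0 ∧ mink x x = -1}

/-- Spatial part x⃗ of x = (x₀, x⃗). -/
def spat (x : Fin 4 → ℝ) : Fin 3 → ℝ := fun i => x i.succ

/-- The Pogorelov map Φ(x,y) = (2x⃗/(x₀+y₀), 2y⃗/(x₀+y₀)). -/
def pog (x y : Fin 4 → ℝ) : (Fin 3 → ℝ) × (Fin 3 → ℝ) :=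
  ((2 / (x 0 + y 0)) • spat x, (2 / (x 0 + y 0)) • spat y)

/-- The matrix η = diag(−1,1,1,1) of the Minkowski inner product. -/
def eta : Matrix (Fin 4) (Fin 4) ℝ := Matrix.diagonal ![(-1 : ℝ), 1, 1, 1]

lemma row_id (A : Matrix (Fin 4) (Fin 4) ℝ) (hA : Aᵀ * eta * A = eta) :
    -(A 0 0 * A 0 0) + A 0 1 * A 0 1 + A 0 2 * A 0 2 + A 0 3 * A 0 3 = -1 := by
  have hinv : (eta * Aᵀ * eta) * A = 1 := by
    have h2 : eta * eta = 1 := by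
      simp [eta, Matrix.diagonal_mul_diagonal]
      ext i
      fin_cases i <;> simp [Matrix.one_apply]
    calc (eta * Aᵀ * eta) * A = eta * (Aᵀ * eta * A) := by noncomm_ring
      _ = eta * eta := by rw [hA]
      _ = 1 := h2
  have hinv2 : A * (eta * Aᵀ * eta) = 1 := mul_eq_one_comm.mp hinv
  have := congrFun (congrFun hinv2 0) 0
  simp [Matrix.mul_apply, eta, Fin.sum_univ_four, Matrix.diagonal, Matrix.one_apply] at this
  linarith [this]

/-- For a Lorentz transformation A preserving the upper hyperboloid, with
Dᵢ = 2A_{i0}/(1 + A₀₀) and R_{ij} = A_{ij} − A_{i0}A_{0j}/(1 + A₀₀), for every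
x ∈ H³, writing Φ(x, Ax) = (a⃗, b⃗), one has b⃗ = D + R a⃗. -/
theorem pogorelov_isometry_explicit (A : Matrix (Fin 4) (Fin 4) ℝ)
    (hA : Aᵀ * eta * A = eta) (hA00 : 1 ≤ A 0 0)
    (x : Fin 4 → ℝ) (hx : x ∈ Hyp) :
    (pog x (A.mulVec x)).2 =
      (fun i : Fin 3 => 2 * A i.succ 0 / (1 + A 0 0)) +
        (Matrix.of fun i j : Fin 3 =>
          A i.succ j.succ - A i.succ 0 * A 0 j.succ / (1 + A 0 0)).mulVec
          (pog x (A.mulVec x)).1 := by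
  obtain ⟨hx0, hxm⟩ := hx
  rw [mink] at hxm
  have hrow := row_id A hA
  have hx1 : 1 ≤ x 0 := by nlinarith [sq_nonneg (x 1), sq_nonneg (x 2), sq_nonneg (x 3)]
  have hy0 : (A.mulVec x) 0 = A 0 0 * x 0 + A 0 1 * x 1 + A 0 2 * x 2 + A 0 3 * x 3 := by
    simp [Matrix.mulVec, dotProduct, Fin.sum_univ_four]
  have hs : 0 < x 0 + (A.mulVec x) 0 := by
    rw [hy0]
    nlinarith [sq_nonneg (A 0 1 * x 2 - A 0 2 * x 1), sq_nonneg (A 0 1 * x 3 - A 0 3 * x 1),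
      sq_nonneg (A 0 2 * x 3 - A 0 3 * x 2),
      sq_nonneg (A 0 1 * x 1 + A 0 2 * x 2 + A 0 3 * x 3 + A 0 0 * x 0),
      mul_pos (lt_of_lt_of_le zero_lt_one hA00) hx0, sq_nonneg (A 0 0 - x 0),
      sq_nonneg (A 0 0 * x 0 - 1)]
  have hne : x 0 + (A.mulVec x) 0 ≠ 0 := ne_of_gt hs
  have hAne : (1 : ℝ) + A 0 0 ≠ 0 := by linarith
  funext i
  simp only [pog, spat, Pi.add_apply, Pi.smul_apply, smul_eq_mul, Matrix.mulVec,
    dotProduct, Fin.sum_univ_three, Fin.sum_univ_four, Matrix.of_apply]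
  have h1 : ((0:Fin 3).succ : Fin 4) = 1 := rfl
  have h2 : ((1:Fin 3).succ : Fin 4) = 2 := rfl
  have h3 : ((2:Fin 3).succ : Fin 4) = 3 := rfl
  rw [hy0] at hne
  rw [h1, h2, h3]
  have hne' : x 0 + x 0 * A 0 0 + x 1 * A 0 1 + x 2 * A 0 2 + x 3 * A 0 3 ≠ 0 := by
    intro h; apply hne; linarith
  field_simp
  ring_nf
  linear_combination (A i.succ 0) * mul_inv_cancel₀ hne'
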